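/- Let σ=(Σ_i)_{i∈[k]} be a trace alphabet, u ∈ Σ^ω an infinite word and v ∈ Σ^∞ a finite or infinite word. Suppose (1) for every i ∈ [k], the projection π_i(v) is a prefix of π_i(u), and (2) for every letter a ∈ Σ, the number of occurrences of a in v equals the number of occurrences of a in u (as elements of ℕ∪{∞}). Then u ∼_σ v, i.e. π_i(u) = π_i(v) for all i ∈ [k]. -/

import Mathlib

open Classical

noncomputable section

namespace MultiBuffer

/-! ### Nondeterministic Büchi automata -/

/-- A nondeterministic Büchi automaton over the alphabet `α`. -/
structure NBA (α : Type) : Type 1 where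
  Q : Type
  finQ : Fintype Q
  init : Q
  δ : Q → α → Set Q
  F : Set Q

variable {α P Q : Type} {k : ℕ}

/-- `r` is (the state sequence of) a run of `A` on the infinite word `w`. -/
def IsRun (A : NBA α) (w : ℕ → α) (r : ℕ → A.Q) : Prop :=
  r 0 = A.init ∧ ∀ n, r (n + 1) ∈ A.δ (r n) (w n)

/-- The state sequence `r` visits accepting states infinitely often. -/
def AcceptingStates (A : NBA α) (r : ℕ → A.Q) : Prop :=
  {n | r n ∈ A.F}.Infinite

/-- The ω-language of a Büchi automaton. -/
def Lang (A : NBA α) : Set (ℕ → α) :=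
  {w | ∃ r, IsRun A w r ∧ AcceptingStates A r}

/-! ### Finite or infinite words, projections and trace equivalence

A finite or infinite word over `α` is represented as a function `ℕ → Option α`
which is `none` from some point on (if finite); infinite words embed via `ofInf`. -/

/-- The infinite word `u` viewed as an element of `Σ^∞`. -/
def ofInf (u : ℕ → α) : ℕ → Option α := fun n => some (u n)

/-- A function `ℕ → Option α` represents a finite or infinite word if after the
first `none` everything is `none`. -/
def Stable (w : ℕ → Option α) : Prop := ∀ n, w n = none → w (n + 1) = none

/-- The number of `i < j` satisfying `p`. -/
def countBelow (p : ℕ → Prop) (j : ℕ) : ℕ := {i | i < j ∧ p i}.ncard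

/-- Position `j` of the word `w` carries a letter belonging to `S`. -/
def InS (S : Set α) (w : ℕ → Option α) (j : ℕ) : Prop := ∃ a ∈ S, w j = some a

/-- The projection `π_S(w)` of the word `w` to the subalphabet `S`: the word obtained
from `w` by deleting all letters not in `S`. -/
def proj (S : Set α) (w : ℕ → Option α) (n : ℕ) : Option α :=
  if h : ∃ j, InS S w j ∧ countBelow (InS S w) j = n then w h.choose else none

/-- Trace equivalence of (finite or infinite) words w.r.t. the trace alphabet
`σ = (Σ_i)_{i ∈ [k]}` : all projections coincide. -/
def TraceEquiv (σ : Fin k → Set α) (u v : ℕ → Option α) : Prop :=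
  ∀ i, proj (σ i) u = proj (σ i) v

/-- The trace closure of a language of infinite words. -/
def closure (σ : Fin k → Set α) (L : Set (ℕ → α)) : Set (ℕ → α) :=
  {v | ∃ u ∈ L, TraceEquiv σ (ofInf u) (ofInf v)}

/-! ### The multi-buffer game -/

/-- A configuration of the multi-buffer game: a state of Spoiler's automaton,
the contents of the `k` buffers, and a state of Duplicator's automaton. -/
structure Conf (α P Q : Type) (k : ℕ) where
  p : P
  bufs : Fin k → List α
  q : Q

/-- Appending the letter `a` to the back of every buffer `i` with `a ∈ σ i`. -/
def push (σ : Fin k → Set α) (bufs : Fin k → List α) (a : α) : Fin k → List α :=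
  fun i => if a ∈ σ i then bufs i ++ [a] else bufs i

/-- Popping the letter `b` from the front of every buffer `i` with `b ∈ σ i`. -/
def pop (σ : Fin k → Set α) (bufs : Fin k → List α) (b : α) : Fin k → List α :=
  fun i => if b ∈ σ i then (bufs i).tail else bufs i

/-- Effect of a Spoiler move `m = (a, p')` on a configuration. -/
def spApply (σ : Fin k → Set α) (c : Conf α P Q k) (m : α × P) : Conf α P Q k :=
  ⟨m.2, push σ c.bufs m.1, c.q⟩

/-- Effect of a (possibly empty) Duplicator move `d = (b₁,q₁)...(b_n,q_n)`. -/
def dupApply (σ : Fin k → Set α) (c : Conf α P Q k) (d : List (α × Q)) : Conf α P Q k :=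
  ⟨c.p, d.foldl (fun bs m => pop σ bs m.1) c.bufs, ((d.getLast?).map Prod.snd).getD c.q⟩

/-- Legality of a Spoiler move: it follows a transition of his automaton. -/
def SpLegal (δA : P → α → Set P) (c : Conf α P Q k) (m : α × P) : Prop :=
  m.2 ∈ δA c.p m.1

/-- Legality of a Duplicator move from a configuration: the moves form a run of her
automaton and each letter is removed from the front of the corresponding buffers. -/
def DupLegal (σ : Fin k → Set α) (δB : Q → α → Set Q) :
    Conf α P Q k → List (α × Q) → Prop
  | _, [] => True
  | c, m :: rest =>
      m.2 ∈ δB c.q m.1 ∧ (∀ i, m.1 ∈ σ i → (c.bufs i).head? = some m.1) ∧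
      DupLegal σ δB ⟨c.p, pop σ c.bufs m.1, m.2⟩ rest

/-- The capacity constraints (checked after a full round). -/
def CapOk (κ : Fin k → ℕ∞) (c : Conf α P Q k) : Prop :=
  ∀ i, ((c.bufs i).length : ℕ∞) ≤ κ i

/-- The list of the first `n` values of the sequence `s`. -/
def hist {β : Type} (s : ℕ → β) (n : ℕ) : List β := List.ofFn (fun i : Fin n => s i)

/-- The configuration of the play after `n` full rounds, when Spoiler plays the
sequence `s` of moves and Duplicator follows the strategy `θ` (which maps the
history of Spoiler moves, including the current one, to her response). -/
def playConf (σ : Fin k → Set α) (θ : List (α × P) → List (α × Q))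
    (c0 : Conf α P Q k) (s : ℕ → α × P) : ℕ → Conf α P Q k
  | 0 => c0
  | n + 1 => dupApply σ (spApply σ (playConf σ θ c0 s n) (s n)) (θ (hist s (n + 1)))

/-- Duplicator's response in round `n`. -/
def resp (θ : List (α × P) → List (α × Q)) (s : ℕ → α × P) (n : ℕ) : List (α × Q) :=
  θ (hist s (n + 1))

/-- Spoiler's move in round `n` is legal. -/
def SpLegalAt (σ : Fin k → Set α) (δA : P → α → Set P) (θ : List (α × P) → List (α × Q))
    (c0 : Conf α P Q k) (s : ℕ → α × P) (n : ℕ) : Prop :=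
  SpLegal δA (playConf σ θ c0 s n) (s n)

/-- Duplicator's response in round `n` is legal and the capacities are respected
after the round. -/
def DupOkAt (σ : Fin k → Set α) (κ : Fin k → ℕ∞) (δB : Q → α → Set Q)
    (θ : List (α × P) → List (α × Q)) (c0 : Conf α P Q k) (s : ℕ → α × P) (n : ℕ) : Prop :=
  DupLegal σ δB (spApply σ (playConf σ θ c0 s n) (s n)) (resp θ s n) ∧
  CapOk κ (playConf σ θ c0 s (n + 1))

/-- The number of occurrences of the letter `a` in Spoiler's word. -/
def spOcc (s : ℕ → α × P) (a : α) : ℕ∞ := {n | (s n).1 = a}.encard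

/-- The number of occurrences of the letter `a` in Duplicator's word. -/
def dupOcc (θ : List (α × P) → List (α × Q)) (s : ℕ → α × P) (a : α) : ℕ∞ :=
  {x : ℕ × ℕ | ∃ m, (resp θ s x.1)[x.2]? = some m ∧ m.1 = a}.encard

/-- Spoiler's run is accepting. -/
def SpAccept (FA : Set P) (s : ℕ → α × P) : Prop := {n | (s n).2 ∈ FA}.Infinite

/-- Duplicator's run is (infinite and) accepting. -/
def DupAccept (FB : Set Q) (θ : List (α × P) → List (α × Q)) (s : ℕ → α × P) : Prop :=
  {n | ∃ m ∈ resp θ s n, m.2 ∈ FB}.Infinite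

/-- Duplicator has a winning strategy in the multi-buffer game (with buffer alphabets
`σ`, capacities `κ`) played on the transition structures `δA`, `δB` with acceptance
sets `FA`, `FB`, starting from the configuration `c0`: she always has legal responses
(as long as Spoiler has played legally), and if the resulting infinite play carries an
accepting run of Spoiler then her own run is infinite and accepting and every letter
occurs equally often in both words (i.e. every letter put into a buffer is eventually
read). Finite plays in which a player is stuck are lost by that player. -/
def DupWinsFrom (σ : Fin k → Set α) (κ : Fin k → ℕ∞) (δA : P → α → Set P)
    (δB : Q → α → Set Q) (FA : Set P) (FB : Set Q) (c0 : Conf α P Q k) : Prop :=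
  ∃ θ : List (α × P) → List (α × Q),
    ∀ s : ℕ → α × P,
      (∀ n, (∀ m ≤ n, SpLegalAt σ δA θ c0 s m) → DupOkAt σ κ δB θ c0 s n) ∧
      ((∀ n, SpLegalAt σ δA θ c0 s n) → SpAccept FA s →
        DupAccept FB θ s ∧ ∀ a : α, spOcc s a = dupOcc θ s a)

/-- The multi-buffer simulation `A ⊑^κ_σ B`. -/
def Simu (σ : Fin k → Set α) (κ : Fin k → ℕ∞) (A B : NBA α) : Prop :=
  DupWinsFrom σ κ A.δ B.δ A.F B.F ⟨A.init, fun _ => [], B.init⟩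


/-- A word `x ∈ Σ^∞` is a prefix of a word `y ∈ Σ^∞` (in the representation of
finite or infinite words as stable functions `ℕ → Option α`). -/
def IsPrefixW {α : Type} (x y : ℕ → Option α) : Prop :=
  ∀ n a, x n = some a → y n = some a

/-- The number of occurrences of the letter `a` in the word `w` (an element of `ℕ∪{∞}`). -/
def occCount {α : Type} (w : ℕ → Option α) (a : α) : ℕ∞ := {n | w n = some a}.encard

private lemma countBelow_finite (p : ℕ → Prop) (j : ℕ) : {i | i < j ∧ p i}.Finite :=
  (Set.finite_Iio j).subset (fun i hi => hi.1)

private lemma exists_count_iff (p : ℕ → Prop) (n : ℕ) :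
    (∃ j, p j ∧ countBelow p j = n) ↔ (n : ℕ∞) < {j | p j}.encard := by
  constructor
  · rintro ⟨j, hpj, hcnt⟩
    have hfin := countBelow_finite p j
    have hins : insert j {i | i < j ∧ p i} ⊆ {j | p j} := by
      rintro i (rfl | hi)
      · exact hpj
      · exact hi.2
    have hnot : j ∉ {i | i < j ∧ p i} := fun h => lt_irrefl j h.1
    have : (insert j {i | i < j ∧ p i}).encard = n + 1 := by
      rw [Set.encard_insert_of_notMem hnot, ← hfin.cast_ncard_eq]
      rw [countBelow] at hcnt
      rw [hcnt]
    calc (n : ℕ∞) < n + 1 := by exact_mod_cast Nat.lt_succ_self n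
      _ = _ := this.symm
      _ ≤ _ := Set.encard_mono hins
  · induction n with
    | zero =>
      intro h
      have hne : {j | p j}.Nonempty := Set.encard_pos.mp (by simpa using h)
      obtain ⟨j0, hj0⟩ := hne
      have hex : ∃ j, p j := ⟨j0, hj0⟩
      refine ⟨Nat.find hex, Nat.find_spec hex, ?_⟩
      have : {i | i < Nat.find hex ∧ p i} = ∅ := by
        ext i; simp only [Set.mem_setOf_eq, Set.mem_empty_iff_false, iff_false, not_and]
        exact fun hi => Nat.find_min hex hi
      rw [countBelow, this, Set.ncard_empty]
    | succ n ih =>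
      intro h
      obtain ⟨j, hpj, hcnt⟩ := ih (lt_trans (by exact_mod_cast Nat.lt_succ_self n) h)
      have hex : ∃ m, j < m ∧ p m := by
        by_contra hno
        push_neg at hno
        have hsub : {i | p i} ⊆ insert j {i | i < j ∧ p i} := by
          intro i hi
          rcases lt_trichotomy i j with hlt | rfl | hgt
          · exact Set.mem_insert_of_mem _ ⟨hlt, hi⟩
          · exact Set.mem_insert _ _
          · exact absurd hi (hno i hgt)
        have hnot : j ∉ {i | i < j ∧ p i} := fun h => lt_irrefl j h.1
        have hle : {i | p i}.encard ≤ (n : ℕ∞) + 1 := by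
          calc {i | p i}.encard ≤ (insert j {i | i < j ∧ p i}).encard := Set.encard_mono hsub
            _ = (n : ℕ∞) + 1 := by
              rw [Set.encard_insert_of_notMem hnot, ← (countBelow_finite p j).cast_ncard_eq]
              rw [countBelow] at hcnt; rw [hcnt]
        exact absurd h (by push_cast; exact not_lt.mpr hle)
      set j' := Nat.find hex with hj'
      obtain ⟨hjj', hpj'⟩ := Nat.find_spec hex
      refine ⟨j', hpj', ?_⟩
      have hset : {i | i < j' ∧ p i} = insert j {i | i < j ∧ p i} := by
        ext i
        simp only [Set.mem_setOf_eq, Set.mem_insert_iff]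
        constructor
        · rintro ⟨hij', hpi⟩
          rcases lt_trichotomy i j with hlt | rfl | hgt
          · exact Or.inr ⟨hlt, hpi⟩
          · exact Or.inl rfl
          · exact absurd ⟨hgt, hpi⟩ (Nat.find_min hex hij')
        · rintro (rfl | ⟨hij, hpi⟩)
          · exact ⟨hjj', hpj⟩
          · exact ⟨lt_trans hij hjj', hpi⟩
      have hnot : j ∉ {i | i < j ∧ p i} := fun h => lt_irrefl j h.1
      rw [countBelow, hset, Set.ncard_insert_of_notMem hnot (countBelow_finite p j)]
      rw [countBelow] at hcnt; rw [hcnt]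

private lemma encard_finset_union {α : Type} (w : ℕ → Option α) (F : Finset α) :
    {j | ∃ a ∈ F, w j = some a}.encard = ∑ a ∈ F, occCount w a := by
  induction F using Finset.induction with
  | empty => simp
  | @insert a F ha ih =>
    have hset : {j | ∃ b ∈ insert a F, w j = some b}
        = {j | w j = some a} ∪ {j | ∃ b ∈ F, w j = some b} := by
      ext j
      simp only [Set.mem_setOf_eq, Finset.mem_insert, Set.mem_union]
      constructor
      · rintro ⟨b, (rfl | hb), hw⟩
        · exact Or.inl hw
        · exact Or.inr ⟨b, hb, hw⟩
      · rintro (hw | ⟨b, hb, hw⟩)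
        · exact ⟨a, Or.inl rfl, hw⟩
        · exact ⟨b, Or.inr hb, hw⟩
    have hdis : Disjoint {j | w j = some a} {j | ∃ b ∈ F, w j = some b} := by
      rw [Set.disjoint_left]
      rintro j hj ⟨b, hb, hw⟩
      rw [Set.mem_setOf_eq, hw] at hj
      obtain rfl : b = a := by injection hj
      exact ha hb
    rw [hset, Set.encard_union_eq hdis, ih, Finset.sum_insert ha, occCount]

private lemma encard_InS_eq {α : Type} [Fintype α] (S : Set α) (u : ℕ → α)
    (v : ℕ → Option α) (hocc : ∀ a : α, occCount v a = occCount (ofInf u) a) :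
    {j | InS S v j}.encard = {j | InS S (ofInf u) j}.encard := by
  have key : ∀ w : ℕ → Option α,
      {j | InS S w j}.encard = ∑ a ∈ Finset.univ.filter (· ∈ S), occCount w a := by
    intro w
    rw [← encard_finset_union]
    congr 1
    ext j
    simp only [Set.mem_setOf_eq, InS, Finset.mem_filter, Finset.mem_univ, true_and]
  rw [key, key]
  exact Finset.sum_congr rfl (fun a _ => hocc a)

private lemma proj_ne_none_iff {α : Type} (S : Set α) (w : ℕ → Option α) (n : ℕ) :
    proj S w n ≠ none ↔ ∃ j, InS S w j ∧ countBelow (InS S w) j = n := by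
  unfold proj
  constructor
  · intro h
    by_contra hno
    rw [dif_neg hno] at h
    exact h rfl
  · intro h
    rw [dif_pos h]
    obtain ⟨a, _, ha⟩ := h.choose_spec.1
    rw [ha]
    exact Option.some_ne_none _

/-- **Lemma.** Let `σ = (Σ_i)_{i∈[k]}` be a trace alphabet, `u ∈ Σ^ω` an infinite
word and `v ∈ Σ^∞` a finite or infinite word. If (1) for every `i`, `π_i(v)` is a
prefix of `π_i(u)` and (2) every letter occurs equally often in `u` and in `v`
(as elements of `ℕ ∪ {∞}`), then `u ∼_σ v`, i.e. `π_i(u) = π_i(v)` for all `i`. -/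
theorem traceEquiv_of_prefix_of_occ {α : Type} [Fintype α] {k : ℕ}
    (σ : Fin k → Set α) (hcov : ∀ a : α, ∃ i, a ∈ σ i)
    (u : ℕ → α) (v : ℕ → Option α) (hv : Stable v)
    (hpre : ∀ i, IsPrefixW (proj (σ i) v) (proj (σ i) (ofInf u)))
    (hocc : ∀ a : α, occCount v a = occCount (ofInf u) a) :
    ∀ i, proj (σ i) (ofInf u) = proj (σ i) v := by
  intro i
  funext n
  cases hvn : proj (σ i) v n with
  | some b => exact hpre i n b hvn
  | none =>
    by_contra hun
    have hun' : proj (σ i) (ofInf u) n ≠ none := hun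
    rw [proj_ne_none_iff, exists_count_iff] at hun'
    rw [← encard_InS_eq (σ i) u v hocc] at hun'
    rw [← exists_count_iff, ← proj_ne_none_iff] at hun'
    exact hun' hvn


end MultiBuffer
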